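/- With ∂, ∂₁, ∂₋₁ the K-linear endomorphisms of K[x] given on monomials by ∂(x^n) = n x^{n-1}, ∂₁(x^n) = [n]_q x^{n-1}, ∂₋₁(x^n) = [n]_{q^{-1}} x^{n-1}, and q ∈ K* not a root of unity, the identity ∂ ∂₋₁ = ∂ ∂₁ - q ∂₁ ∂ + (q-1) ∂₁ ∂₋₁ + q^{-1} ∂₋₁ ∂ holds in End_K(K[x]). -/
import Mathlib


open Polynomial

/-- The quadratic relation `∂∂₋₁ = ∂∂₁ - q∂₁∂ + (q-1)∂₁∂₋₁ + q⁻¹∂₋₁∂`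
for the operators `∂, ∂₁, ∂₋₁` on `K[x]`. -/
theorem stmt8 {K : Type*} [Field K] [CharZero K] (q : K) (hq0 : q ≠ 0)
    (hq : ∀ n : ℕ, 0 < n → q ^ n ≠ 1)
    (D D1 Dm1 : Module.End K (Polynomial K))
    (hD : ∀ n : ℕ, D (X ^ n) = (n : K) • X ^ (n - 1))
    (hD1 : ∀ n : ℕ, D1 (X ^ n) = (∑ i ∈ Finset.range n, q ^ i) • X ^ (n - 1))
    (hDm1 : ∀ n : ℕ, Dm1 (X ^ n) = (∑ i ∈ Finset.range n, (q⁻¹) ^ i) • X ^ (n - 1)) :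
    D * Dm1 = D * D1 - q • (D1 * D) + (q - 1) • (D1 * Dm1) + q⁻¹ • (Dm1 * D) := by
  have hq1 : q ≠ 1 := by simpa using hq 1 one_pos
  have key : ∀ k : ℕ, q ^ k * (∑ i ∈ Finset.range k, (q⁻¹) ^ i)
      = q * ∑ i ∈ Finset.range k, q ^ i := by
    intro k
    induction k with
    | zero => simp
    | succ k ih =>
      rw [Finset.sum_range_succ, Finset.sum_range_succ, mul_add, mul_add]
      have h2 : q ^ (k + 1) * (q⁻¹) ^ k = q := by
        rw [inv_pow, pow_succ]
        field_simp
      rw [h2, pow_succ]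
      linear_combination q * ih + q * geom_sum_mul q k
  apply Polynomial.lhom_ext'
  intro n
  apply LinearMap.ext_ring
  simp only [LinearMap.coe_comp, Function.comp_apply, Polynomial.monomial_one_right_eq_X_pow,
    Module.End.mul_apply, LinearMap.sub_apply, LinearMap.add_apply, LinearMap.smul_apply,
    hD, hD1, hDm1, map_smul, smul_smul]
  cases n with
  | zero => simp
  | succ m =>
    simp only [Nat.add_sub_cancel]
    rw [← sub_smul, ← add_smul, ← add_smul]
    congr 1
    have hqm1 : q ^ (m + 1) ≠ 0 := pow_ne_zero _ hq0
    set s := ∑ i ∈ Finset.range m, q ^ i with hs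
    set t := ∑ i ∈ Finset.range (m + 1), q ^ i with ht2
    set B := ∑ i ∈ Finset.range m, (q⁻¹) ^ i with hB2
    set b := ∑ i ∈ Finset.range (m + 1), (q⁻¹) ^ i with hb2
    have K1 : q ^ (m + 1) * b = q * t := key (m + 1)
    have K0 : q ^ m * B = q * s := key m
    have Hqi : q ^ (m + 1) * q⁻¹ = q ^ m := by
      rw [pow_succ]
      field_simp
    have hPm : q ^ m = s * (q - 1) + 1 := by
      rw [hs]
      linear_combination (-1 : K) * geom_sum_mul q m
    have htt : t = 1 + q * s := by
      rw [ht2, hs, geom_sum_succ]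
      ring
    push_cast
    apply mul_left_cancel₀ hqm1
    linear_combination ((m : K) - (q - 1) * s) * K1 + (-((m : K) + 1) * B) * Hqi
      + (-((m : K) + 1)) * K0 + (-(q * t * (m : K)) + q ^ 2 * ((m : K) + 1) * s) * hPm
      + (-(q * (q - 1) * ((m : K) + 1) * s)) * htt
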